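/- Let s = (s₁, s₂) and t = (t₁, t₂) be probability vectors in ℝ². Then, for n = 2, T_{C^Q}(diag(s), diag(t)) = (1/2)·max( (√s₁ − √t₁)², (√s₂ − √t₂)² ). -/

import Mathlib

open Matrix ComplexOrder

/-- A density matrix: positive semidefinite with trace one. -/
def IsDensityMatrix {k : Type*} [Fintype k] [DecidableEq k] (ρ : Matrix k k ℂ) : Prop :=
  ρ.PosSemidef ∧ ρ.trace = 1

/-- Partial trace over the second factor. -/
noncomputable def trB {m n : ℕ} (R : Matrix (Fin m × Fin n) (Fin m × Fin n) ℂ) :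
    Matrix (Fin m) (Fin m) ℂ :=
  Matrix.of fun i j => ∑ p, R (i, p) (j, p)

/-- Partial trace over the first factor. -/
noncomputable def trA {m n : ℕ} (R : Matrix (Fin m × Fin n) (Fin m × Fin n) ℂ) :
    Matrix (Fin n) (Fin n) ℂ :=
  Matrix.of fun p q => ∑ i, R (i, p) (i, q)

/-- The set of quantum couplings of two density matrices. -/
def QCouplings {m n : ℕ} (ρA : Matrix (Fin m) (Fin m) ℂ) (ρB : Matrix (Fin n) (Fin n) ℂ) :
    Set (Matrix (Fin m × Fin n) (Fin m × Fin n) ℂ) :=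
  {R | IsDensityMatrix R ∧ trB R = ρA ∧ trA R = ρB}

/-- The quantum optimal transport cost. -/
noncomputable def QOT {m n : ℕ} (C : Matrix (Fin m × Fin n) (Fin m × Fin n) ℂ)
    (ρA : Matrix (Fin m) (Fin m) ℂ) (ρB : Matrix (Fin n) (Fin n) ℂ) : ℝ :=
  sInf ((fun R => ((C * R).trace).re) '' QCouplings ρA ρB)

/-- The SWAP matrix on `Fin n × Fin n`. -/
noncomputable def swapM (n : ℕ) : Matrix (Fin n × Fin n) (Fin n × Fin n) ℂ :=
  Matrix.of fun x y => if x.1 = y.2 ∧ x.2 = y.1 then 1 else 0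

/-- The quantum cost matrix `C^Q = (1/2) (I - S)`. -/
noncomputable def CQ (n : ℕ) : Matrix (Fin n × Fin n) (Fin n × Fin n) ℂ :=
  (1 / 2 : ℂ) • (1 - swapM n)

/-- Kronecker product of square matrices indexed by `Fin m` and `Fin n`. -/
noncomputable def kron {m n : ℕ} (A : Matrix (Fin m) (Fin m) ℂ)
    (B : Matrix (Fin n) (Fin n) ℂ) : Matrix (Fin m × Fin n) (Fin m × Fin n) ℂ :=
  Matrix.of fun x y => A x.1 y.1 * B x.2 y.2

/-! ### Auxiliary lemmas -/

lemma sqrt_key {b e S T : ℝ} (hb : 0 ≤ b) (he : 0 ≤ e) (hbS : b ≤ S) (heT : e ≤ T)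
    (h : S - b = T - e) :
    (Real.sqrt S - Real.sqrt T)^2 ≤ (Real.sqrt b - Real.sqrt e)^2 := by
  have hS : 0 ≤ S := hb.trans hbS
  have hT : 0 ≤ T := he.trans heT
  have hp := Real.sq_sqrt hb
  have hq := Real.sq_sqrt he
  have hP := Real.sq_sqrt hS
  have hQ := Real.sq_sqrt hT
  have hpn := Real.sqrt_nonneg b
  have hqn := Real.sqrt_nonneg e
  have hPn := Real.sqrt_nonneg S
  have hQn := Real.sqrt_nonneg T
  have ha : 0 ≤ S - b := sub_nonneg.2 hbS
  have hkey : (S - b) + Real.sqrt b * Real.sqrt e ≤ Real.sqrt S * Real.sqrt T := by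
    have h1 : ((S - b) + Real.sqrt b * Real.sqrt e)^2 ≤ (Real.sqrt S * Real.sqrt T)^2 := by
      nlinarith [mul_nonneg ha (sq_nonneg (Real.sqrt b - Real.sqrt e))]
    nlinarith [mul_nonneg hPn hQn, mul_nonneg hpn hqn]
  nlinarith [hkey]

lemma diag_re_nonneg {ι : Type*} [Fintype ι] [DecidableEq ι] {R : Matrix ι ι ℂ}
    (hR : R.PosSemidef) (x : ι) : 0 ≤ (R x x).re := by
  have h := hR.dotProduct_mulVec_nonneg (Pi.single x 1)
  rw [Complex.le_def] at h
  simpa [dotProduct, Matrix.mulVec, Pi.single_apply, Finset.sum_ite_eq,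
    Finset.sum_ite_eq'] using h.1

lemma offdiag_bound {R : Matrix (Fin 2 × Fin 2) (Fin 2 × Fin 2) ℂ}
    (hR : R.PosSemidef) :
    (R (0,1) (1,0)).re ≤ Real.sqrt ((R (0,1) (0,1)).re) * Real.sqrt ((R (1,0) (1,0)).re) := by
  have hA : 0 ≤ (R (0,1) (0,1)).re := diag_re_nonneg hR _
  have hB : 0 ≤ (R (1,0) (1,0)).re := diag_re_nonneg hR _
  have hherm := congrFun (congrFun hR.1 ((1:Fin 2),(0:Fin 2))) ((0:Fin 2),(1:Fin 2))
  simp only [Matrix.conjTranspose_apply] at hherm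
  have hre : (R (1,0) (0,1)).re = (R (0,1) (1,0)).re := by rw [← hherm]; simp
  have hq : ∀ r : ℝ, 0 ≤ (R (0,1) (0,1)).re * (r * r) +
      (2 * (R (0,1) (1,0)).re) * r + (R (1,0) (1,0)).re := by
    intro r
    have h := hR.dotProduct_mulVec_nonneg (fun k => if k = ((0:Fin 2),(1:Fin 2)) then (r:ℂ)
      else if k = ((1:Fin 2),(0:Fin 2)) then 1 else 0)
    rw [Complex.le_def] at h
    have h1 := h.1
    simp (config := { decide := true }) only [dotProduct, Matrix.mulVec,
      Fintype.sum_prod_type, Fin.sum_univ_two, Prod.mk.injEq, Pi.star_apply,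
      if_true, if_false, and_true, true_and, and_false, false_and, mul_zero, zero_mul,
      mul_one, one_mul, add_zero, zero_add, star_zero, star_one, Complex.star_def,
      Complex.conj_ofReal, Complex.add_re, Complex.mul_re, Complex.ofReal_re,
      Complex.ofReal_im, Complex.zero_re, Complex.zero_im, Complex.one_re, Complex.one_im,
      _root_.map_zero, _root_.map_one, zero_sub, sub_zero, neg_zero] at h1
    rw [hre] at h1; nlinarith [h1]
  have hd := discrim_le_zero hq
  have hC2 : (R (0,1) (1,0)).re ^ 2 ≤ (R (0,1) (0,1)).re * (R (1,0) (1,0)).re := by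
    unfold discrim at hd; nlinarith [hd]
  calc (R (0,1) (1,0)).re ≤ |(R (0,1) (1,0)).re| := le_abs_self _
    _ = Real.sqrt ((R (0,1) (1,0)).re ^ 2) := (Real.sqrt_sq_eq_abs _).symm
    _ ≤ Real.sqrt ((R (0,1) (0,1)).re * (R (1,0) (1,0)).re) := Real.sqrt_le_sqrt hC2
    _ = Real.sqrt ((R (0,1) (0,1)).re) * Real.sqrt ((R (1,0) (1,0)).re) :=
        Real.sqrt_mul hA _

lemma cost_formula (R : Matrix (Fin 2 × Fin 2) (Fin 2 × Fin 2) ℂ) :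
    (CQ 2 * R).trace = (1/2) * (R.trace -
      (R (0,0) (0,0) + R (1,0) (0,1) + R (0,1) (1,0) + R (1,1) (1,1))) := by
  have : (CQ 2 * R) = (1/2 : ℂ) • (R - swapM 2 * R) := by
    simp [CQ, Matrix.sub_mul, Matrix.smul_mul, Matrix.one_mul]
  rw [this, Matrix.trace_smul, Matrix.trace_sub]
  have h2 : (swapM 2 * R).trace =
      R (0,0) (0,0) + R (1,0) (0,1) + R (0,1) (1,0) + R (1,1) (1,1) := by
    simp [Matrix.trace, Matrix.diag, Matrix.mul_apply, swapM, Fintype.sum_prod_type,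
      Fin.sum_univ_two, Prod.ext_iff]
    ring
  rw [h2]
  simp

lemma cost_re {R : Matrix (Fin 2 × Fin 2) (Fin 2 × Fin 2) ℂ} (htr : R.trace = 1) :
    ((CQ 2 * R).trace).re = (1/2) * (1 -
      ((R (0,0) (0,0)).re + (R (1,0) (0,1)).re + (R (0,1) (1,0)).re + (R (1,1) (1,1)).re)) := by
  rw [cost_formula, htr]
  have h12 : (1/2 : ℂ) = ((1/2 : ℝ) : ℂ) := by norm_num
  rw [h12]
  simp [Complex.mul_re, Complex.ofReal_re, Complex.ofReal_im, Complex.sub_re,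
    Complex.add_re, Complex.one_re]

noncomputable def Bmat (a b e d : ℝ) : Matrix (Fin 2 × Fin 2) (Fin 2 × Fin 2) ℂ :=
  Matrix.of fun x y =>
    if x = (0,0) ∧ y = (0,0) then (Real.sqrt a : ℂ)
    else if x = (0,1) ∧ y = (0,1) then (Real.sqrt b : ℂ)
    else if x = (0,1) ∧ y = (1,0) then (Real.sqrt e : ℂ)
    else if x = (1,1) ∧ y = (1,1) then (Real.sqrt d : ℂ)
    else 0

noncomputable def Emat (a b e d : ℝ) : Matrix (Fin 2 × Fin 2) (Fin 2 × Fin 2) ℂ :=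
  Matrix.of fun x y =>
    if x = (0,0) ∧ y = (0,0) then (a : ℂ)
    else if x = (0,1) ∧ y = (0,1) then (b : ℂ)
    else if x = (0,1) ∧ y = (1,0) then ((Real.sqrt b * Real.sqrt e : ℝ) : ℂ)
    else if x = (1,0) ∧ y = (0,1) then ((Real.sqrt b * Real.sqrt e : ℝ) : ℂ)
    else if x = (1,0) ∧ y = (1,0) then (e : ℂ)
    else if x = (1,1) ∧ y = (1,1) then (d : ℂ)
    else 0

lemma Emat_eq (a b e d : ℝ) (ha : 0 ≤ a) (hb : 0 ≤ b) (he : 0 ≤ e) (hd : 0 ≤ d) :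
    (Bmat a b e d)ᴴ * (Bmat a b e d) = Emat a b e d := by
  ext ⟨i, p⟩ ⟨j, q⟩
  fin_cases i <;> fin_cases p <;> fin_cases j <;> fin_cases q <;>
    simp (config := { decide := true }) [Bmat, Emat, Matrix.mul_apply,
      Matrix.conjTranspose_apply, Fintype.sum_prod_type, Fin.sum_univ_two, Prod.mk.injEq,
      Real.mul_self_sqrt, ha, hb, he, hd, Complex.ofReal_mul] <;> norm_cast <;>
    simp [Real.mul_self_sqrt ha, Real.mul_self_sqrt hb, Real.mul_self_sqrt he,
      Real.mul_self_sqrt hd, mul_comm]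

lemma Emat_posSemidef (a b e d : ℝ) (ha : 0 ≤ a) (hb : 0 ≤ b) (he : 0 ≤ e) (hd : 0 ≤ d) :
    (Emat a b e d).PosSemidef := by
  rw [← Emat_eq a b e d ha hb he hd]
  exact Matrix.posSemidef_conjTranspose_mul_self _

/-- closed formula for the transport cost between two diagonal qubits. -/
theorem qot_diag_qubit (s t : Fin 2 → ℝ)
    (hs : (∀ i, 0 ≤ s i) ∧ ∑ i, s i = 1)
    (ht : (∀ i, 0 ≤ t i) ∧ ∑ i, t i = 1) :
    QOT (CQ 2) (Matrix.diagonal fun i => (s i : ℂ)) (Matrix.diagonal fun i => (t i : ℂ)) =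
      (1 / 2) * max ((Real.sqrt (s 0) - Real.sqrt (t 0)) ^ 2)
        ((Real.sqrt (s 1) - Real.sqrt (t 1)) ^ 2) := by
  obtain ⟨hs0, hs1⟩ := hs
  obtain ⟨ht0, ht1⟩ := ht
  rw [Fin.sum_univ_two] at hs1 ht1
  have hs00 := hs0 0
  have hs01 := hs0 1
  have ht00 := ht0 0
  have ht01 := ht0 1
  set a := max 0 (s 0 + t 0 - 1) with hadef
  set b := s 0 - a with hbdef
  set e := t 0 - a with hedef
  set d := 1 - s 0 - t 0 + a with hddef
  have ha : 0 ≤ a := le_max_left _ _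
  have ha2 : s 0 + t 0 - 1 ≤ a := le_max_right _ _
  have hab : a ≤ s 0 := max_le hs00 (by linarith)
  have hae : a ≤ t 0 := max_le ht00 (by linarith)
  have hb : 0 ≤ b := by rw [hbdef]; linarith
  have he : 0 ≤ e := by rw [hedef]; linarith
  have hd : 0 ≤ d := by rw [hddef]; linarith
  have flip : ∀ x y : ℝ, (x - y)^2 = (y - x)^2 := by intros; ring
  unfold QOT
  apply IsLeast.csInf_eq
  constructor
  · -- membership: the explicit optimal coupling
    have htrE : (Emat a b e d).trace = 1 := by
      simp (config := { decide := true }) [Matrix.trace, Matrix.diag, Emat,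
        Fintype.sum_prod_type, Fin.sum_univ_two]
      norm_cast
      rw [hbdef, hedef, hddef]; ring
    refine ⟨Emat a b e d, ⟨⟨Emat_posSemidef a b e d ha hb he hd, htrE⟩, ?_, ?_⟩, ?_⟩
    · ext i j
      fin_cases i <;> fin_cases j <;>
        simp (config := { decide := true }) [trB, Emat, Fin.sum_univ_two,
          Matrix.diagonal] <;> norm_cast <;> [skip; skip] <;> linarith
    · ext i j
      fin_cases i <;> fin_cases j <;>
        simp (config := { decide := true }) [trA, Emat, Fin.sum_univ_two,
          Matrix.diagonal] <;> norm_cast <;> [skip; skip] <;> linarith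
    · -- the value equals the max formula
      show ((CQ 2 * Emat a b e d).trace).re = _
      rw [cost_re htrE]
      have hE1 : (Emat a b e d (0,0) (0,0)).re = a := by
        simp (config := { decide := true }) [Emat]
      have hE2 : (Emat a b e d (1,0) (0,1)).re = Real.sqrt b * Real.sqrt e := by
        simp (config := { decide := true }) [Emat]
      have hE3 : (Emat a b e d (0,1) (1,0)).re = Real.sqrt b * Real.sqrt e := by
        simp (config := { decide := true }) [Emat]
      have hE4 : (Emat a b e d (1,1) (1,1)).re = d := by
        simp (config := { decide := true }) [Emat]
      rw [hE1, hE2, hE3, hE4]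
      by_cases hc : s 0 + t 0 ≤ 1
      · have haz : a = 0 := max_eq_left (by linarith)
        have hbs : b = s 0 := by rw [hbdef, haz]; ring
        have hes : e = t 0 := by rw [hedef, haz]; ring
        have hmax : max ((Real.sqrt (s 0) - Real.sqrt (t 0)) ^ 2)
            ((Real.sqrt (s 1) - Real.sqrt (t 1)) ^ 2)
            = (Real.sqrt (s 0) - Real.sqrt (t 0)) ^ 2 := by
          apply max_eq_left
          have := sqrt_key (b := t 0) (e := s 0) (S := s 1) (T := t 1)
            ht00 hs00 (by linarith) (by linarith) (by linarith)
          rw [flip (Real.sqrt (t 0)) (Real.sqrt (s 0))] at this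
          exact this
        rw [hmax, hbs, hes, haz]
        rw [sub_sq, Real.sq_sqrt hs00, Real.sq_sqrt ht00]
        rw [hddef, haz]
        ring
      · have haz : a = s 0 + t 0 - 1 := max_eq_right (by linarith)
        have hbs : b = t 1 := by rw [hbdef, haz]; linarith
        have hes : e = s 1 := by rw [hedef, haz]; linarith
        have hmax : max ((Real.sqrt (s 0) - Real.sqrt (t 0)) ^ 2)
            ((Real.sqrt (s 1) - Real.sqrt (t 1)) ^ 2)
            = (Real.sqrt (s 1) - Real.sqrt (t 1)) ^ 2 := by
          apply max_eq_right
          have := sqrt_key (b := t 1) (e := s 1) (S := s 0) (T := t 0)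
            ht01 hs01 (by linarith) (by linarith) (by linarith)
          rw [flip (Real.sqrt (t 1)) (Real.sqrt (s 1))] at this
          exact this
        rw [hmax, hbs, hes]
        rw [sub_sq, Real.sq_sqrt hs01, Real.sq_sqrt ht01]
        rw [hddef, haz]
        ring_nf
        nlinarith [Real.sqrt_nonneg (s 1), Real.sqrt_nonneg (t 1)]
  · -- lower bound
    rintro v ⟨R, ⟨⟨hpsd, htr⟩, hB, hA⟩, rfl⟩
    show _ ≤ ((CQ 2 * R).trace).re
    have haR : 0 ≤ (R (0,0) (0,0)).re := diag_re_nonneg hpsd _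
    have hbR : 0 ≤ (R (0,1) (0,1)).re := diag_re_nonneg hpsd _
    have heR : 0 ≤ (R (1,0) (1,0)).re := diag_re_nonneg hpsd _
    have hdR : 0 ≤ (R (1,1) (1,1)).re := diag_re_nonneg hpsd _
    have hC := offdiag_bound hpsd
    have hmarg : ∀ (M : Matrix (Fin 2) (Fin 2) ℂ) (f : Fin 2 → ℝ) (i : Fin 2),
        M = Matrix.diagonal (fun i => (f i : ℂ)) → (M i i).re = f i := by
      intro M f i hM
      rw [hM]; simp [Matrix.diagonal]
    have h1 : (R (0,0) (0,0)).re + (R (0,1) (0,1)).re = s 0 := by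
      have := hmarg _ _ 0 hB
      simp [trB, Fin.sum_univ_two, -Prod.mk_zero_zero, -Prod.mk_one_one] at this
      linarith [this]
    have h2 : (R (1,0) (1,0)).re + (R (1,1) (1,1)).re = s 1 := by
      have := hmarg _ _ 1 hB
      simp [trB, Fin.sum_univ_two, -Prod.mk_zero_zero, -Prod.mk_one_one] at this
      linarith [this]
    have h3 : (R (0,0) (0,0)).re + (R (1,0) (1,0)).re = t 0 := by
      have := hmarg _ _ 0 hA
      simp [trA, Fin.sum_univ_two, -Prod.mk_zero_zero, -Prod.mk_one_one] at this
      linarith [this]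
    have h4 : (R (0,1) (0,1)).re + (R (1,1) (1,1)).re = t 1 := by
      have := hmarg _ _ 1 hA
      simp [trA, Fin.sum_univ_two, -Prod.mk_zero_zero, -Prod.mk_one_one] at this
      linarith [this]
    have hherm : (R (1,0) (0,1)).re = (R (0,1) (1,0)).re := by
      have := congrFun (congrFun hpsd.1 ((1:Fin 2),(0:Fin 2))) ((0:Fin 2),(1:Fin 2))
      simp only [Matrix.conjTranspose_apply] at this
      rw [← this]; simp
    rw [cost_re htr, hherm]
    have hkey1 : (Real.sqrt (s 0) - Real.sqrt (t 0))^2 ≤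
        (Real.sqrt ((R (0,1) (0,1)).re) - Real.sqrt ((R (1,0) (1,0)).re))^2 :=
      sqrt_key hbR heR (by linarith) (by linarith) (by linarith)
    have hkey2 : (Real.sqrt (s 1) - Real.sqrt (t 1))^2 ≤
        (Real.sqrt ((R (0,1) (0,1)).re) - Real.sqrt ((R (1,0) (1,0)).re))^2 := by
      have := sqrt_key (b := (R (1,0) (1,0)).re) (e := (R (0,1) (0,1)).re)
        (S := s 1) (T := t 1) heR hbR (by linarith) (by linarith) (by linarith)
      rw [flip (Real.sqrt ((R (1,0) (1,0)).re)) (Real.sqrt ((R (0,1) (0,1)).re))] at this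
      exact this
    have hsq : (Real.sqrt ((R (0,1) (0,1)).re) - Real.sqrt ((R (1,0) (1,0)).re))^2 =
        (R (0,1) (0,1)).re + (R (1,0) (1,0)).re
          - 2 * (Real.sqrt ((R (0,1) (0,1)).re) * Real.sqrt ((R (1,0) (1,0)).re)) := by
      rw [sub_sq, Real.sq_sqrt hbR, Real.sq_sqrt heR]; ring
    have hmax := max_le hkey1 hkey2
    linarith [hmax, hC, hsq]
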